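/- If Banach spaces X and Y are not essentially incomparable, then there exist bounded operators U on X and V on Y that are Schur coupled but not Fredholm. -/

import Mathlib

open ContinuousLinearMap

variable {X Y : Type*} [NormedAddCommGroup X] [NormedSpace ℂ X]
  [NormedAddCommGroup Y] [NormedSpace ℂ Y]

/-- A bounded operator is *Fredholm* if it has finite dimensional kernel and
closed range of finite codimension. -/
def IsFredholm (T : X →L[ℂ] Y) : Prop :=
  FiniteDimensional ℂ (LinearMap.ker (T : X →ₗ[ℂ] Y)) ∧ IsClosed (LinearMap.range (T : X →ₗ[ℂ] Y) : Set Y) ∧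
    FiniteDimensional ℂ (Y ⧸ LinearMap.range (T : X →ₗ[ℂ] Y))

/-- The Fredholm index `dim ker − dim coker`. -/
noncomputable def fredholmIndex (T : X →L[ℂ] Y) : ℤ :=
  (Module.finrank ℂ (LinearMap.ker (T : X →ₗ[ℂ] Y)) : ℤ) - (Module.finrank ℂ (Y ⧸ LinearMap.range (T : X →ₗ[ℂ] Y)) : ℤ)

/-- `S : X → Y` is *inessential* if `I_X − T S` is Fredholm for every bounded `T : Y → X`. -/
def Inessential (S : X →L[ℂ] Y) : Prop :=
  ∀ T : Y →L[ℂ] X, _root_.IsFredholm (ContinuousLinearMap.id ℂ X - T ∘L S)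

/-- Banach spaces `X`, `Y` are *essentially incomparable* if every bounded operator
`X → Y` is inessential. -/
def EssentiallyIncomparable (X Y : Type*) [NormedAddCommGroup X] [NormedSpace ℂ X]
    [NormedAddCommGroup Y] [NormedSpace ℂ Y] : Prop :=
  ∀ S : X →L[ℂ] Y, Inessential S

/-- `U` and `V` are *Schur coupled* if they arise as the two Schur complements of a
`2 × 2` block operator on `X × Y` with invertible diagonal entries. -/
def SchurCoupled (U : X →L[ℂ] X) (V : Y →L[ℂ] Y) : Prop :=
  ∃ (A : X ≃L[ℂ] X) (D : Y ≃L[ℂ] Y) (B : Y →L[ℂ] X) (C : X →L[ℂ] Y),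
    U = (A : X →L[ℂ] X) - B ∘L (D.symm : Y →L[ℂ] Y) ∘L C ∧
    V = (D : Y →L[ℂ] Y) - C ∘L (A.symm : X →L[ℂ] X) ∘L B

lemma isClosed_range_of_finiteDimensional_ker_coker
    {E F : Type*} [NormedAddCommGroup E] [NormedSpace ℂ E] [CompleteSpace E]
    [NormedAddCommGroup F] [NormedSpace ℂ F] [CompleteSpace F] (T : E →L[ℂ] F)
    (hker : FiniteDimensional ℂ (LinearMap.ker (T : E →ₗ[ℂ] F)))
    (hcoker : FiniteDimensional ℂ (F ⧸ LinearMap.range (T : E →ₗ[ℂ] F))) :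
    IsClosed (LinearMap.range (T : E →ₗ[ℂ] F) : Set F) := by
  obtain ⟨W, hWc, hW⟩ :=
    (Submodule.ClosedComplemented.of_finiteDimensional (LinearMap.ker (T : E →ₗ[ℂ] F))).exists_isClosed_isCompl
  obtain ⟨G, hG⟩ := Submodule.exists_isCompl (LinearMap.range (T : E →ₗ[ℂ] F))
  haveI : FiniteDimensional ℂ G :=
    ((LinearMap.range (T : E →ₗ[ℂ] F)).quotientEquivOfIsCompl G hG).finiteDimensional
  haveI : CompleteSpace W := hWc.completeSpace_coe
  set Φ : W × G →L[ℂ] F := (T.comp W.subtypeL).coprod G.subtypeL with hΦ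
  have hΦapp : ∀ p : W × G, Φ p = T p.1 + (p.2 : F) := fun p => rfl
  have hinj : Function.Injective Φ := by
    rw [injective_iff_map_eq_zero]
    rintro ⟨w, g⟩ hp
    rw [hΦapp] at hp
    have h0 : T (w : E) = -(g : F) := eq_neg_of_add_eq_zero_left hp
    have hmem : T (w : E) ∈ LinearMap.range (T : E →ₗ[ℂ] F) ⊓ G :=
      ⟨LinearMap.mem_range_self _ _, by rw [h0]; exact neg_mem g.2⟩
    rw [hG.inf_eq_bot, Submodule.mem_bot] at hmem
    have hg : g = 0 := Subtype.ext (by rw [hmem] at h0; simpa using h0.symm)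
    have hwmem : (w : E) ∈ LinearMap.ker (T : E →ₗ[ℂ] F) ⊓ W := ⟨hmem, w.2⟩
    rw [hW.inf_eq_bot, Submodule.mem_bot] at hwmem
    have hw : w = 0 := Subtype.ext hwmem
    simp [hw, hg, Prod.ext_iff]
  have hsurj : Function.Surjective Φ := by
    intro y
    have hy : y ∈ LinearMap.range (T : E →ₗ[ℂ] F) ⊔ G := by rw [hG.sup_eq_top]; trivial
    obtain ⟨r, hr, g, hg, hrg⟩ := Submodule.mem_sup.1 hy
    obtain ⟨x, hx⟩ := hr
    have hxk : x ∈ LinearMap.ker (T : E →ₗ[ℂ] F) ⊔ W := by rw [hW.sup_eq_top]; trivial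
    obtain ⟨k, hk, w, hw, hkw⟩ := Submodule.mem_sup.1 hxk
    refine ⟨(⟨w, hw⟩, ⟨g, hg⟩), ?_⟩
    rw [hΦapp]
    have hTw : T w = T x := by
      have hx' : T x = T k + T w := by rw [← hkw, map_add]
      rw [hx', (show T k = 0 from LinearMap.mem_ker.1 hk), zero_add]
    simp only [hTw, (show T x = r from hx), hrg]
  have hbij : Function.Bijective (Φ : W × G →ₗ[ℂ] F) := ⟨hinj, hsurj⟩
  let e : (W × G) ≃ₗ[ℂ] F := LinearEquiv.ofBijective (Φ : W × G →ₗ[ℂ] F) hbij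
  let Φe : (W × G) ≃L[ℂ] F := e.toContinuousLinearEquivOfContinuous Φ.continuous
  have hΦe : ∀ p : W × G, Φe p = Φ p := fun p => rfl
  have hset : (LinearMap.range (T : E →ₗ[ℂ] F) : Set F) = Φe '' (Prod.snd ⁻¹' ({0} : Set G)) := by
    ext y
    constructor
    · rintro ⟨x, hx⟩
      have hxk : x ∈ LinearMap.ker (T : E →ₗ[ℂ] F) ⊔ W := by rw [hW.sup_eq_top]; trivial
      obtain ⟨k, hk, w, hw, hkw⟩ := Submodule.mem_sup.1 hxk
      refine ⟨(⟨w, hw⟩, 0), rfl, ?_⟩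
      rw [hΦe, hΦapp]
      have hTw : T w = T x := by
        have hx' : T x = T k + T w := by rw [← hkw, map_add]
        rw [hx', (show T k = 0 from LinearMap.mem_ker.1 hk), zero_add]
      simp [hTw, (show T x = y from hx)]
    · rintro ⟨⟨w, g⟩, hg0, rfl⟩
      have hg : g = 0 := hg0
      rw [hΦe, hΦapp, hg]
      exact ⟨w, by simp⟩
  rw [hset, Φe.image_eq_preimage_symm]
  exact (isClosed_singleton.preimage continuous_snd).preimage Φe.symm.continuous

theorem not_essIncomparable_schurCoupled_not_fredholm
    {X Y : Type*} [NormedAddCommGroup X] [NormedSpace ℂ X] [CompleteSpace X]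
    [NormedAddCommGroup Y] [NormedSpace ℂ Y] [CompleteSpace Y]
    (h : ¬ EssentiallyIncomparable X Y) :
    ∃ (U : X →L[ℂ] X) (V : Y →L[ℂ] Y),
      SchurCoupled U V ∧ ¬ _root_.IsFredholm U ∧ ¬ _root_.IsFredholm V := by
  simp only [EssentiallyIncomparable, Inessential, not_forall] at h
  obtain ⟨S, T, hTS⟩ := h
  set U : X →L[ℂ] X := ContinuousLinearMap.id ℂ X - T ∘L S with hU
  set V : Y →L[ℂ] Y := ContinuousLinearMap.id ℂ Y - S ∘L T with hV
  have hUapp : ∀ x, U x = x - T (S x) := fun x => rfl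
  have hVapp : ∀ y, V y = y - S (T y) := fun y => rfl
  refine ⟨U, V, ⟨ContinuousLinearEquiv.refl ℂ X, ContinuousLinearEquiv.refl ℂ Y, T, S, ?_, ?_⟩,
    hTS, ?_⟩
  · ext x; simp [hUapp]
  · ext y; simp [hVapp]
  · rintro ⟨hk, hr, hq⟩
    apply hTS
    haveI := hk
    haveI := hq
    -- finite dimensional kernel
    have hSker : ∀ x : LinearMap.ker (U : X →ₗ[ℂ] X), S (x : X) ∈ LinearMap.ker (V : Y →ₗ[ℂ] Y) := by
      rintro ⟨x, hx⟩
      have hx' : T (S x) = x := by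
        have : U x = 0 := LinearMap.mem_ker.1 hx
        rw [hUapp, sub_eq_zero] at this
        exact this.symm
      simp only [LinearMap.mem_ker, ContinuousLinearMap.coe_coe, hVapp, hx', sub_self]
    set φ : LinearMap.ker (U : X →ₗ[ℂ] X) →ₗ[ℂ] LinearMap.ker (V : Y →ₗ[ℂ] Y) :=
      LinearMap.codRestrict (LinearMap.ker (V : Y →ₗ[ℂ] Y))
        ((S : X →ₗ[ℂ] Y).comp (LinearMap.ker (U : X →ₗ[ℂ] X)).subtype) hSker with hφ
    have hφinj : Function.Injective φ := by
      rw [injective_iff_map_eq_zero]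
      rintro ⟨x, hx⟩ hx0
      have hSx : S x = 0 := congrArg Subtype.val hx0
      have hx' : T (S x) = x := by
        have : U x = 0 := LinearMap.mem_ker.1 hx
        rw [hUapp, sub_eq_zero] at this
        exact this.symm
      have : x = 0 := by rw [← hx', hSx, map_zero]
      exact Subtype.ext this
    have hkerU : FiniteDimensional ℂ (LinearMap.ker (U : X →ₗ[ℂ] X)) :=
      FiniteDimensional.of_injective φ hφinj
    -- finite dimensional cokernel
    have hle : LinearMap.range (U : X →ₗ[ℂ] X) ≤ (LinearMap.range (V : Y →ₗ[ℂ] Y)).comap (S : X →ₗ[ℂ] Y) := by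
      rintro _ ⟨x, rfl⟩
      refine ⟨S x, ?_⟩
      change V (S x) = S (U x); rw [hVapp, hUapp, map_sub]
    set ψ : (X ⧸ LinearMap.range (U : X →ₗ[ℂ] X)) →ₗ[ℂ] (Y ⧸ LinearMap.range (V : Y →ₗ[ℂ] Y)) :=
      Submodule.mapQ (LinearMap.range (U : X →ₗ[ℂ] X)) (LinearMap.range (V : Y →ₗ[ℂ] Y)) (S : X →ₗ[ℂ] Y) hle with hψ
    have hψinj : Function.Injective ψ := by
      rw [injective_iff_map_eq_zero]
      intro a ha
      obtain ⟨x, rfl⟩ := Submodule.mkQ_surjective _ a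
      rw [Submodule.mkQ_apply, Submodule.mapQ_apply] at ha
      have hSx : S x ∈ LinearMap.range (V : Y →ₗ[ℂ] Y) := (Submodule.Quotient.mk_eq_zero _).1 ha
      obtain ⟨y, hy⟩ := hSx
      have hSx' : S x = y - S (T y) := by rw [← hVapp, (show V y = S x from hy)]
      have hUx : U (x + T y) = x := by
        simp only [hUapp, map_add, hSx', map_sub]
        abel
      rw [Submodule.mkQ_apply, Submodule.Quotient.mk_eq_zero]
      exact ⟨x + T y, hUx⟩
    have hcokU : FiniteDimensional ℂ (X ⧸ LinearMap.range (U : X →ₗ[ℂ] X)) :=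
      FiniteDimensional.of_injective ψ hψinj
    exact ⟨hkerU, isClosed_range_of_finiteDimensional_ker_coker U hkerU hcokU, hcokU⟩
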